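/- (Volume-average dynamics under radial diffusion.) Let R > 0, D > 0, T > 0. Let c : [0, T] × [0, R] → ℝ and j : [0, T] → ℝ be such that: (i) for each t, r ↦ c(t, r) is differentiable on (0, R] and the function g(t, r) := r²·∂c/∂r(t, r) extends continuously to [0, R] with g(t, 0) = 0; (ii) ∂c/∂t exists and is continuous on [0, T] × [0, R]; (iii) the radial diffusion equation ∂c/∂t(t, r) = (D/r²)·∂/∂r(r²·∂c/∂r(t, r)) holds for all (t, r) with 0 < r ≤ R; and (iv) the surface flux condition −D·∂c/∂r(t, R) = j(t) holds for all t. Then the volume average c̄(t) := (3/R³)·∫₀^R c(t, r)·r² dr is differentiable on [0, T] with c̄'(t) = −(3/R)·j(t). -/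

import Mathlib

open MeasureTheory Set

/-- Volume-average dynamics under radial diffusion: if `c(t,r)`
satisfies the radial diffusion equation
`∂c/∂t = (D/r²)·∂/∂r(r²·∂c/∂r)` for `0 < r ≤ R` (encoded via the radial
derivative `cr`, the time derivative `ct`, and the extended flux function
`g(t,r) = r²·∂c/∂r` with `g(t,0) = 0` continuous on `[0,R]`), together with
the surface flux condition `−D·∂c/∂r(t,R) = j(t)`, then the volume average
`c̄(t) = (3/R³)∫₀^R c(t,r) r² dr` is differentiable on `[0,T]` with
`c̄'(t) = −(3/R)·j(t)`. -/
theorem volume_average_dynamics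
    (R D T : ℝ) (hR : 0 < R) (hD : 0 < D) (hT : 0 < T)
    (c cr ct g : ℝ → ℝ → ℝ) (j : ℝ → ℝ)
    (hcr : ∀ t ∈ Set.Icc (0 : ℝ) T, ∀ r ∈ Set.Ioc (0 : ℝ) R,
      HasDerivAt (c t) (cr t r) r)
    (hg_eq : ∀ t ∈ Set.Icc (0 : ℝ) T, ∀ r ∈ Set.Ioc (0 : ℝ) R,
      g t r = r ^ 2 * cr t r)
    (hg0 : ∀ t ∈ Set.Icc (0 : ℝ) T, g t 0 = 0)
    (hgcont : ∀ t ∈ Set.Icc (0 : ℝ) T, ContinuousOn (g t) (Set.Icc (0 : ℝ) R))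
    (hct : ∀ t ∈ Set.Icc (0 : ℝ) T, ∀ r ∈ Set.Icc (0 : ℝ) R,
      HasDerivWithinAt (fun s => c s r) (ct t r) (Set.Icc (0 : ℝ) T) t)
    (hctcont : ContinuousOn (fun p : ℝ × ℝ => ct p.1 p.2)
      (Set.Icc (0 : ℝ) T ×ˢ Set.Icc (0 : ℝ) R))
    (hpde : ∀ t ∈ Set.Icc (0 : ℝ) T, ∀ r ∈ Set.Ioc (0 : ℝ) R,
      HasDerivAt (g t) (r ^ 2 * ct t r / D) r)
    (hflux : ∀ t ∈ Set.Icc (0 : ℝ) T, -D * cr t R = j t) :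
    ∀ t ∈ Set.Icc (0 : ℝ) T,
      HasDerivWithinAt (fun s => (3 / R ^ 3) * ∫ r in (0 : ℝ)..R, c s r * r ^ 2)
        (-(3 / R) * j t) (Set.Icc (0 : ℝ) T) t := by
  intro t ht
  obtain ⟨ht0, htT⟩ := ht
  have htIcc : t ∈ Set.Icc (0 : ℝ) T := ⟨ht0, htT⟩
  have h0T : (0 : ℝ) ∈ Set.Icc (0 : ℝ) T := ⟨le_rfl, hT.le⟩
  -- a uniform bound on ct
  obtain ⟨M, hM⟩ : ∃ M, ∀ p ∈ Set.Icc (0 : ℝ) T ×ˢ Set.Icc (0 : ℝ) R,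
      |ct p.1 p.2| ≤ M := by
    have := (isCompact_Icc.prod isCompact_Icc).exists_bound_of_continuousOn hctcont
    simpa [Real.norm_eq_abs] using this
  have hM0 : 0 ≤ M :=
    le_trans (abs_nonneg _) (hM (0, 0) ⟨⟨le_rfl, hT.le⟩, ⟨le_rfl, hR.le⟩⟩)
  -- continuity of ct in each variable
  have hctr : ∀ s ∈ Set.Icc (0 : ℝ) T,
      ContinuousOn (fun r => ct s r) (Set.Icc (0 : ℝ) R) := fun s hs =>
    hctcont.comp ((continuous_const.prodMk continuous_id).continuousOn)
      (fun r hr => Set.mk_mem_prod hs hr)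
  have hctt : ∀ r ∈ Set.Icc (0 : ℝ) R,
      ContinuousOn (fun u => ct u r) (Set.Icc (0 : ℝ) T) := fun r hr =>
    hctcont.comp ((continuous_id.prodMk continuous_const).continuousOn)
      (fun u hu => Set.mk_mem_prod hu hr)
  -- FTC representation of g in the radial variable
  have hgFTC : ∀ s ∈ Set.Icc (0 : ℝ) T, ∀ r ∈ Set.Ioc (0 : ℝ) R,
      g s r = ∫ u in (0 : ℝ)..r, u ^ 2 * ct s u / D := by
    intro s hs r hr
    have h1 : ∫ u in (0 : ℝ)..r, u ^ 2 * ct s u / D = g s r - g s 0 := by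
      apply intervalIntegral.integral_eq_sub_of_hasDeriv_right_of_le hr.1.le
      · exact (hgcont s hs).mono (Set.Icc_subset_Icc le_rfl hr.2)
      · intro x hx
        exact (hpde s hs x ⟨hx.1, hx.2.le.trans hr.2⟩).hasDerivWithinAt
      · apply ContinuousOn.intervalIntegrable
        rw [Set.uIcc_of_le hr.1.le]
        exact (((continuous_pow 2).continuousOn).mul
          ((hctr s hs).mono (Set.Icc_subset_Icc le_rfl hr.2))).div_const D
    rw [hg0 s hs, sub_zero] at h1
    exact h1.symm
  -- uniform bound on cr
  set K : ℝ := M / D * R / 3 with hK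
  have hcrbound : ∀ s ∈ Set.Icc (0 : ℝ) T, ∀ r ∈ Set.Ioc (0 : ℝ) R,
      |cr s r| ≤ K := by
    intro s hs r hr
    have hN : 0 ≤ M / D := div_nonneg hM0 hD.le
    have hgb : |g s r| ≤ M / D * (r ^ 3 / 3) := by
      have hb : ∀ u ∈ Set.Icc (0 : ℝ) r, ‖u ^ 2 * ct s u / D‖ ≤ M / D * u ^ 2 := by
        intro u hu
        have hub : |ct s u| ≤ M := hM (s, u) ⟨hs, ⟨hu.1, hu.2.trans hr.2⟩⟩
        rw [Real.norm_eq_abs, abs_div, abs_mul, abs_of_nonneg (sq_nonneg u),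
          abs_of_pos hD]
        rw [div_le_iff₀ hD]
        calc u ^ 2 * |ct s u| ≤ u ^ 2 * M := by
              exact mul_le_mul_of_nonneg_left hub (sq_nonneg u)
          _ = M / D * u ^ 2 * D := by field_simp
      have hbint : IntervalIntegrable (fun u => M / D * u ^ 2) volume 0 r :=
        ((continuous_const.mul (continuous_pow 2)).intervalIntegrable _ _)
      have hle := intervalIntegral.norm_integral_le_abs_of_norm_le
        (μ := volume) (f := fun u => u ^ 2 * ct s u / D) (a := 0) (b := r)
        ?_ hbint
      · have hval : (∫ u in (0 : ℝ)..r, M / D * u ^ 2) = M / D * (r ^ 3 / 3) := by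
          rw [intervalIntegral.integral_const_mul, integral_pow]
          norm_num
        rw [Real.norm_eq_abs, hval] at hle
        calc |g s r| ≤ |M / D * (r ^ 3 / 3)| := by
              rw [hgFTC s hs r hr]; exact hle
          _ = M / D * (r ^ 3 / 3) := abs_of_nonneg
              (mul_nonneg hN (div_nonneg (pow_nonneg hr.1.le 3) (by norm_num)))
      · filter_upwards [ae_restrict_mem measurableSet_Ioc] with u hu
        rw [Set.uIoc_of_le hr.1.le] at hu
        exact hb u ⟨hu.1.le, hu.2⟩
    have hgeq : |g s r| = r ^ 2 * |cr s r| := by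
      rw [hg_eq s hs r hr, abs_mul, abs_of_nonneg (sq_nonneg r)]
    rw [hgeq] at hgb
    have hr0 : 0 < r := hr.1
    have hrR : r ≤ R := hr.2
    nlinarith [abs_nonneg (cr s r), sq_nonneg r, mul_pos hr0 hr0,
      mul_nonneg (mul_nonneg hN (mul_pos hr0 hr0).le) (sub_nonneg.mpr hrR)]
  have hK0 : 0 ≤ K := by
    have := hcrbound t htIcc R (Set.right_mem_Ioc.mpr hR)
    exact le_trans (abs_nonneg _) this
  -- boundedness of c in the radial variable
  have hcbound : ∀ s ∈ Set.Icc (0 : ℝ) T, ∀ r ∈ Set.Ioc (0 : ℝ) R,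
      |c s r| ≤ |c s R| + K * R := by
    intro s hs r hr
    have hmvt := Convex.norm_image_sub_le_of_norm_hasDerivWithin_le
      (f := c s) (f' := cr s) (C := K)
      (fun x hx => (hcr s hs x hx).hasDerivWithinAt)
      (fun x hx => by simpa [Real.norm_eq_abs] using hcrbound s hs x hx)
      (convex_Ioc (0 : ℝ) R) (Set.right_mem_Ioc.mpr hR) hr
    rw [Real.norm_eq_abs, Real.norm_eq_abs] at hmvt
    have habs : |r - R| ≤ R := by
      rw [abs_sub_comm, abs_of_nonneg (sub_nonneg.mpr hr.2)]
      linarith [hr.1]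
    calc |c s r| = |(c s r - c s R) + c s R| := by ring_nf
      _ ≤ |c s r - c s R| + |c s R| := abs_add_le _ _
      _ ≤ K * |r - R| + |c s R| := by linarith [hmvt]
      _ ≤ K * R + |c s R| := by nlinarith [mul_le_mul_of_nonneg_left habs hK0]
      _ = |c s R| + K * R := by ring
  -- integrability of the integrand
  have hcint : ∀ s ∈ Set.Icc (0 : ℝ) T,
      IntervalIntegrable (fun r => c s r * r ^ 2) volume 0 R := by
    intro s hs
    rw [intervalIntegrable_iff, Set.uIoc_of_le hR.le]
    have hmeas : AEStronglyMeasurable (fun r => c s r * r ^ 2)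
        (volume.restrict (Set.Ioc (0 : ℝ) R)) := by
      apply ContinuousOn.aestronglyMeasurable _ measurableSet_Ioc
      have hc1 : ContinuousOn (fun r => c s r) (Set.Ioc (0 : ℝ) R) :=
        fun r hr => (hcr s hs r hr).continuousAt.continuousWithinAt
      exact hc1.mul ((continuous_pow 2).continuousOn)
    apply Integrable.mono' (g := fun _ => (|c s R| + K * R) * R ^ 2)
      (integrableOn_const measure_Ioc_lt_top.ne) hmeas
    filter_upwards [ae_restrict_mem measurableSet_Ioc] with r hr
    rw [Real.norm_eq_abs, abs_mul, abs_of_nonneg (sq_nonneg r)]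
    apply mul_le_mul (hcbound s hs r hr) _ (sq_nonneg r)
      (by positivity)
    nlinarith [hr.1.le, hr.2]
  -- FTC in the time variable
  have htFTC : ∀ s ∈ Set.Icc (0 : ℝ) T, ∀ r ∈ Set.Icc (0 : ℝ) R,
      c s r - c 0 r = ∫ u in (0 : ℝ)..s, ct u r := by
    intro s hs r hr
    have h1 : ∫ u in (0 : ℝ)..s, ct u r = c s r - c 0 r := by
      apply intervalIntegral.integral_eq_sub_of_hasDeriv_right_of_le hs.1
      · have hc1 : ContinuousOn (fun u => c u r) (Set.Icc (0 : ℝ) T) :=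
          fun u hu => (hct u hu r hr).continuousWithinAt
        exact hc1.mono (Set.Icc_subset_Icc le_rfl hs.2)
      · intro x hx
        have hxT : x ∈ Set.Icc (0 : ℝ) T := ⟨hx.1.le, hx.2.le.trans hs.2⟩
        apply (hct x hxT r hr).mono_of_mem_nhdsWithin
        apply mem_nhdsWithin.mpr
        exact ⟨Set.Iio T, isOpen_Iio, lt_of_lt_of_le hx.2 hs.2,
          fun y hy => ⟨le_of_lt (lt_trans hx.1 hy.2), hy.1.le⟩⟩
      · apply ContinuousOn.intervalIntegrable
        rw [Set.uIcc_of_le hs.1]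
        exact (hctt r hr).mono (Set.Icc_subset_Icc le_rfl hs.2)
    exact h1.symm
  -- the function G
  set G : ℝ → ℝ := fun u => ∫ r in (0 : ℝ)..R, ct u r * r ^ 2 with hGdef
  have hGmeas : ∀ u ∈ Set.Icc (0 : ℝ) T,
      AEStronglyMeasurable (fun r => ct u r * r ^ 2)
        (volume.restrict (Set.uIoc (0 : ℝ) R)) := by
    intro u hu
    rw [Set.uIoc_of_le hR.le]
    apply ContinuousOn.aestronglyMeasurable _ measurableSet_Ioc
    exact ((hctr u hu).mono Set.Ioc_subset_Icc_self).mul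
      ((continuous_pow 2).continuousOn)
  have hGcont : ContinuousOn G (Set.Icc (0 : ℝ) T) := by
    intro u₀ hu₀
    apply intervalIntegral.continuousWithinAt_of_dominated_interval
      (bound := fun _ => M * R ^ 2)
    · filter_upwards [self_mem_nhdsWithin] with u hu using hGmeas u hu
    · filter_upwards [self_mem_nhdsWithin] with u hu
      apply Filter.Eventually.of_forall
      intro r hr
      rw [Set.uIoc_of_le hR.le] at hr
      rw [Real.norm_eq_abs, abs_mul, abs_of_nonneg (sq_nonneg r)]
      have h1 : |ct u r| ≤ M := hM (u, r) ⟨hu, ⟨hr.1.le, hr.2⟩⟩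
      nlinarith [abs_nonneg (ct u r), sq_nonneg r, hr.1.le, hr.2, sq_nonneg R,
        pow_le_pow_left₀ hr.1.le hr.2 2]
    · exact intervalIntegrable_const
    · apply Filter.Eventually.of_forall
      intro r hr
      rw [Set.uIoc_of_le hR.le] at hr
      exact ((hctt r ⟨hr.1.le, hr.2⟩ u₀ hu₀).mul continuousWithinAt_const)
  -- Fubini: the key representation
  have key : ∀ s ∈ Set.Icc (0 : ℝ) T,
      (∫ r in (0 : ℝ)..R, c s r * r ^ 2)
        = (∫ r in (0 : ℝ)..R, c 0 r * r ^ 2) + ∫ u in (0 : ℝ)..s, G u := by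
    intro s hs
    have hsub : (∫ r in (0 : ℝ)..R, c s r * r ^ 2)
          - (∫ r in (0 : ℝ)..R, c 0 r * r ^ 2)
        = ∫ r in (0 : ℝ)..R, (c s r - c 0 r) * r ^ 2 := by
      rw [← intervalIntegral.integral_sub (hcint s hs) (hcint 0 h0T)]
      congr 1
      ext r
      ring
    have hcongr : (∫ r in (0 : ℝ)..R, (c s r - c 0 r) * r ^ 2)
        = ∫ r in (0 : ℝ)..R, (∫ u in (0 : ℝ)..s, ct u r) * r ^ 2 := by
      apply intervalIntegral.integral_congr
      intro r hr
      rw [Set.uIcc_of_le hR.le] at hr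
      show (c s r - c 0 r) * r ^ 2 = (∫ u in (0 : ℝ)..s, ct u r) * r ^ 2
      rw [htFTC s hs r hr]
    have hmul : ∀ r : ℝ, (∫ u in (0 : ℝ)..s, ct u r) * r ^ 2
        = ∫ u in (0 : ℝ)..s, ct u r * r ^ 2 := fun r =>
      (intervalIntegral.integral_mul_const _ _).symm
    have hswap : (∫ r in (0 : ℝ)..R, ∫ u in (0 : ℝ)..s, ct u r * r ^ 2)
        = ∫ u in (0 : ℝ)..s, G u := by
      have hint : Integrable (Function.uncurry fun r u => ct u r * r ^ 2)
          ((volume.restrict (Set.Ioc (0 : ℝ) R)).prod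
            (volume.restrict (Set.Ioc (0 : ℝ) s))) := by
        rw [Measure.prod_restrict]
        have hcont2 : ContinuousOn (Function.uncurry fun r u => ct u r * r ^ 2)
            (Set.Icc (0 : ℝ) R ×ˢ Set.Icc (0 : ℝ) s) := by
          apply ContinuousOn.mul
          · exact hctcont.comp ((continuous_snd.prodMk continuous_fst).continuousOn)
              (fun p hp => Set.mk_mem_prod ⟨hp.2.1, hp.2.2.trans hs.2⟩ hp.1)
          · exact ((continuous_pow 2).comp continuous_fst).continuousOn
        have := hcont2.integrableOn_compact (μ := (volume : Measure (ℝ × ℝ)))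
          (isCompact_Icc.prod isCompact_Icc)
        rw [← Measure.volume_eq_prod]
        exact this.mono_set (Set.prod_mono Set.Ioc_subset_Icc_self Set.Ioc_subset_Icc_self)
      rw [intervalIntegral.integral_of_le hR.le, intervalIntegral.integral_of_le hs.1]
      simp_rw [intervalIntegral.integral_of_le hs.1]
      rw [MeasureTheory.integral_integral_swap hint]
      apply setIntegral_congr_fun measurableSet_Ioc
      intro u hu
      simp only [hGdef]
      exact (intervalIntegral.integral_of_le hR.le).symm
    simp_rw [hmul] at hcongr
    rw [hcongr, hswap] at hsub
    linarith [hsub]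
  -- the value of G t
  have hGt : G t = -(R ^ 2) * j t := by
    have h1 : ∫ r in (0 : ℝ)..R, r ^ 2 * ct t r / D = g t R - g t 0 := by
      apply intervalIntegral.integral_eq_sub_of_hasDeriv_right_of_le hR.le
      · exact hgcont t htIcc
      · intro x hx
        exact (hpde t htIcc x ⟨hx.1, hx.2.le⟩).hasDerivWithinAt
      · apply ContinuousOn.intervalIntegrable
        rw [Set.uIcc_of_le hR.le]
        exact (((continuous_pow 2).continuousOn).mul (hctr t htIcc)).div_const D
    have h2 : G t = D * g t R := by
      rw [hGdef]
      have hrw : ∀ r : ℝ, ct t r * r ^ 2 = D * (r ^ 2 * ct t r / D) := by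
        intro r
        field_simp
      simp_rw [hrw]
      rw [intervalIntegral.integral_const_mul, h1, hg0 t htIcc, sub_zero]
    rw [h2, hg_eq t htIcc R (Set.right_mem_Ioc.mpr hR)]
    linear_combination (-(R ^ 2) : ℝ) * hflux t htIcc
  -- differentiate
  haveI : Fact (t ∈ Set.Icc (0 : ℝ) T) := ⟨htIcc⟩
  have hGint : IntervalIntegrable G volume 0 t := by
    apply ContinuousOn.intervalIntegrable
    rw [Set.uIcc_of_le ht0]
    exact hGcont.mono (Set.Icc_subset_Icc le_rfl htT)
  have hderivI : HasDerivWithinAt (fun s => ∫ u in (0 : ℝ)..s, G u) (G t)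
      (Set.Icc (0 : ℝ) T) t :=
    intervalIntegral.integral_hasDerivWithinAt_right hGint
      ⟨Set.Icc (0 : ℝ) T, self_mem_nhdsWithin,
        hGcont.aestronglyMeasurable measurableSet_Icc⟩
      (hGcont t htIcc)
  have hFderiv : HasDerivWithinAt (fun s => ∫ r in (0 : ℝ)..R, c s r * r ^ 2)
      (G t) (Set.Icc (0 : ℝ) T) t := by
    have h := hderivI.const_add (∫ r in (0 : ℝ)..R, c 0 r * r ^ 2)
    exact h.congr (fun s hs => key s hs) (key t htIcc)
  have hfinal := hFderiv.const_mul (3 / R ^ 3)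
  refine hfinal.congr_deriv ?_
  rw [hGt]
  field_simp
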